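/- For all n ≥ 0, ∑_{k=0}^n M_k(t) M_{n-k}(t) = (1/2) ∑_{k=0}^n C(2n+2, 2k+1) t^k, where M_n(t) = ∑_{k=0}^n C(n,k)^2 t^k is the type-B Narayana polynomial. -/

import Mathlib

open Finset Polynomial

noncomputable def Mpoly (n : ℕ) : Polynomial ℚ :=
  ∑ i ∈ range (n + 1), ((n.choose i : ℚ) ^ 2) • (X : Polynomial ℚ) ^ i

noncomputable def Rpoly (n : ℕ) : Polynomial ℚ :=
  (1 / 2 : ℚ) • ∑ k ∈ range (n + 1), (((2 * n + 2).choose (2 * k + 1) : ℚ)) • (X : Polynomial ℚ) ^ k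

lemma coeff_M (n k : ℕ) : (Mpoly n).coeff k = (n.choose k : ℚ) ^ 2 := by
  unfold Mpoly
  rw [Polynomial.finset_sum_coeff]
  simp only [Polynomial.coeff_smul, Polynomial.coeff_X_pow, smul_eq_mul, mul_ite, mul_one,
    mul_zero]
  rw [Finset.sum_ite_eq (range (n + 1)) k (fun i => ((n.choose i : ℚ)) ^ 2)]
  by_cases h : k ∈ range (n + 1)
  · rw [if_pos h]
  · rw [if_neg h]
    rw [Finset.mem_range, not_lt] at h
    rw [Nat.choose_eq_zero_of_lt (by omega)]
    norm_num

lemma coeff_R (n k : ℕ) : (Rpoly n).coeff k = (1 / 2 : ℚ) * ((2 * n + 2).choose (2 * k + 1)) := by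
  unfold Rpoly
  rw [Polynomial.coeff_smul, Polynomial.finset_sum_coeff]
  simp only [Polynomial.coeff_smul, Polynomial.coeff_X_pow, smul_eq_mul, mul_ite, mul_one,
    mul_zero]
  rw [Finset.sum_ite_eq (range (n + 1)) k (fun i => (((2 * n + 2).choose (2 * i + 1) : ℚ)))]
  by_cases h : k ∈ range (n + 1)
  · rw [if_pos h]
  · rw [if_neg h]
    rw [Finset.mem_range, not_lt] at h
    rw [Nat.choose_eq_zero_of_lt (by omega)]
    norm_num

lemma choose_linear (n j : ℕ) :
    ((j : ℚ) + 1) * (n.choose (j + 1)) = ((n : ℚ) - j) * (n.choose j) := by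
  rcases lt_or_ge j n with h | h
  · have := Nat.choose_succ_right_eq n j
    have hcast : ((n.choose (j + 1) : ℚ)) * (j + 1) = (n.choose j : ℚ) * ((n : ℚ) - j) := by
      rw [show ((n:ℚ) - j) = ((n - j : ℕ) : ℚ) by push_cast [Nat.cast_sub h.le]; ring]
      exact_mod_cast congrArg (Nat.cast : ℕ → ℚ) this
    linarith [hcast]
  · rcases eq_or_lt_of_le h with h' | h'
    · subst h'
      rw [Nat.choose_eq_zero_of_lt (by omega)]
      simp
    · rw [Nat.choose_eq_zero_of_lt (by omega), Nat.choose_eq_zero_of_lt (by omega)]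
      simp

lemma Mrec (n : ℕ) :
    ((n : ℚ) + 2) • Mpoly (n + 2) =
      (2 * (n : ℚ) + 3) • ((1 + X) * Mpoly (n + 1)) -
        ((n : ℚ) + 1) • ((1 - X) ^ 2 * Mpoly n) := by
  have h1 : (1 + X) * Mpoly (n + 1) = Mpoly (n + 1) + X * Mpoly (n + 1) := by ring
  have h2 : (1 - X) ^ 2 * Mpoly n
      = Mpoly n - C (2 : ℚ) * (X * Mpoly n) + X * (X * Mpoly n) := by
    rw [map_ofNat C 2]; ring
  ext k
  rw [h1, h2]
  simp only [Polynomial.coeff_smul, Polynomial.coeff_add, Polynomial.coeff_sub, smul_eq_mul,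
    Polynomial.coeff_C_mul]
  match k with
  | 0 =>
    simp only [Polynomial.mul_coeff_zero, Polynomial.coeff_X_zero, zero_mul, coeff_M,
      Nat.choose_zero_right, Nat.cast_one, mul_zero]
    ring
  | 1 =>
    rw [Polynomial.coeff_X_mul, Polynomial.coeff_X_mul, Polynomial.coeff_X_mul]
    simp only [Polynomial.mul_coeff_zero, Polynomial.coeff_X_zero, zero_mul, coeff_M,
      Nat.choose_zero_right, Nat.choose_one_right]
    push_cast
    ring
  | (j + 2) =>
    rw [Polynomial.coeff_X_mul, Polynomial.coeff_X_mul, Polynomial.coeff_X_mul,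
      Polynomial.coeff_X_mul]
    simp only [coeff_M]
    set a : ℚ := (n.choose j : ℚ) with ha
    set b : ℚ := (n.choose (j + 1) : ℚ) with hbdef
    set c : ℚ := (n.choose (j + 2) : ℚ) with hcdef
    have pa : ((n + 1).choose (j + 1) : ℚ) = a + b := by
      rw [Nat.choose_succ_succ]; push_cast; ring
    have pb : ((n + 1).choose (j + 2) : ℚ) = b + c := by
      rw [Nat.choose_succ_succ]; push_cast; ring
    have pc : ((n + 2).choose (j + 2) : ℚ) = a + 2 * b + c := by
      rw [show n + 2 = (n + 1) + 1 from rfl, Nat.choose_succ_succ]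
      push_cast
      rw [pa, pb]; ring
    have hb : b = ((n : ℚ) - j) * a / ((j : ℚ) + 1) := by
      have := choose_linear n j
      field_simp
      linarith [this]
    have hc : c = ((n : ℚ) - (j + 1)) * b / ((j : ℚ) + 2) := by
      have := choose_linear n (j + 1)
      push_cast at this
      field_simp
      linarith [this]
    rw [pa, pb, pc, hc, hb]
    field_simp
    ring

lemma Mrec' (n : ℕ) :
    ((n : Polynomial ℚ) + 2) * Mpoly (n + 2) =
      (2 * (n : Polynomial ℚ) + 3) * ((1 + X) * Mpoly (n + 1)) -
        ((n : Polynomial ℚ) + 1) * ((1 - X) ^ 2 * Mpoly n) := by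
  have h := Mrec n
  rw [Polynomial.smul_eq_C_mul, Polynomial.smul_eq_C_mul, Polynomial.smul_eq_C_mul] at h
  simp only [map_add, map_mul, map_ofNat, map_natCast, map_one] at h
  exact h

lemma hp (M i : ℕ) :
    (M + 2).choose (i + 2) = M.choose i + 2 * M.choose (i + 1) + M.choose (i + 2) := by
  rw [Nat.choose_succ_succ (M + 1) (i + 1), Nat.choose_succ_succ M i,
    Nat.choose_succ_succ M (i + 1)]
  ring

lemma Rrec (m : ℕ) :
    Rpoly (m + 2) = 2 * (1 + X) * Rpoly (m + 1) - (1 - X) ^ 2 * Rpoly m := by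
  have h1 : 2 * (1 + X) * Rpoly (m + 1)
      = C (2 : ℚ) * Rpoly (m + 1) + C (2 : ℚ) * (X * Rpoly (m + 1)) := by
    rw [map_ofNat C 2]; ring
  have h2 : (1 - X) ^ 2 * Rpoly m
      = Rpoly m - C (2 : ℚ) * (X * Rpoly m) + X * (X * Rpoly m) := by
    rw [map_ofNat C 2]; ring
  ext k
  rw [h1, h2]
  simp only [Polynomial.coeff_add, Polynomial.coeff_sub, Polynomial.coeff_C_mul]
  match k with
  | 0 =>
    simp only [Polynomial.mul_coeff_zero, Polynomial.coeff_X_zero, zero_mul, coeff_R,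
      mul_zero, add_zero, sub_zero]
    norm_num [Nat.choose_one_right]
    ring
  | 1 =>
    rw [Polynomial.coeff_X_mul, Polynomial.coeff_X_mul, Polynomial.coeff_X_mul]
    simp only [Polynomial.mul_coeff_zero, Polynomial.coeff_X_zero, zero_mul, coeff_R]
    have e1 : (2 * (m + 2) + 2).choose (2 * 1 + 1)
        = (2 * m + 4).choose 1 + 2 * (2 * m + 4).choose 2 + (2 * m + 4).choose 3 := by
      rw [show 2 * (m + 2) + 2 = (2 * m + 4) + 2 from by ring, show 2 * 1 + 1 = 1 + 2 from rfl]
      exact hp _ _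
    have e2 : (2 * (m + 1) + 2).choose (2 * 1 + 1)
        = (2 * m + 2).choose 1 + 2 * (2 * m + 2).choose 2 + (2 * m + 2).choose 3 := by
      rw [show 2 * (m + 1) + 2 = (2 * m + 2) + 2 from by ring, show 2 * 1 + 1 = 1 + 2 from rfl]
      exact hp _ _
    have e3 : (2 * m + 4).choose 2
        = (2 * m + 2).choose 0 + 2 * (2 * m + 2).choose 1 + (2 * m + 2).choose 2 := by
      rw [show 2 * m + 4 = (2 * m + 2) + 2 from by ring, show 2 = 0 + 2 from rfl]
      exact hp _ _
    have e4 : (2 * m + 4).choose 3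
        = (2 * m + 2).choose 1 + 2 * (2 * m + 2).choose 2 + (2 * m + 2).choose 3 := by
      rw [show 2 * m + 4 = (2 * m + 2) + 2 from by ring, show 3 = 1 + 2 from rfl]
      exact hp _ _
    rw [e1, e2, e3, e4, show 2 * m + 2 + 2 = 2 * m + 4 from by ring]
    rw [show (2 * m + 2).choose (2 * 0 + 1) = (2 * m + 2).choose 1 from rfl]
    norm_num [Nat.choose_one_right, Nat.choose_zero_right]
    ring
  | (j + 2) =>
    rw [Polynomial.coeff_X_mul, Polynomial.coeff_X_mul, Polynomial.coeff_X_mul,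
      Polynomial.coeff_X_mul]
    simp only [coeff_R]
    have e6 : (2 * (m + 2) + 2).choose (2 * (j + 2) + 1)
        = (2 * m + 4).choose (2 * j + 3) + 2 * (2 * m + 4).choose (2 * j + 4)
          + (2 * m + 4).choose (2 * j + 5) := by
      rw [show 2 * (m + 2) + 2 = (2 * m + 4) + 2 from by ring,
        show 2 * (j + 2) + 1 = (2 * j + 3) + 2 from by ring]
      exact hp _ _
    have e5a : (2 * (m + 1) + 2).choose (2 * (j + 2) + 1)
        = (2 * m + 2).choose (2 * j + 3) + 2 * (2 * m + 2).choose (2 * j + 4)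
          + (2 * m + 2).choose (2 * j + 5) := by
      rw [show 2 * (m + 1) + 2 = (2 * m + 2) + 2 from by ring,
        show 2 * (j + 2) + 1 = (2 * j + 3) + 2 from by ring]
      exact hp _ _
    have e5b : (2 * (m + 1) + 2).choose (2 * (j + 1) + 1)
        = (2 * m + 2).choose (2 * j + 1) + 2 * (2 * m + 2).choose (2 * j + 2)
          + (2 * m + 2).choose (2 * j + 3) := by
      rw [show 2 * (m + 1) + 2 = (2 * m + 2) + 2 from by ring,
        show 2 * (j + 1) + 1 = (2 * j + 1) + 2 from by ring]
      exact hp _ _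
    have e4a : (2 * m + 4).choose (2 * j + 3)
        = (2 * m + 2).choose (2 * j + 1) + 2 * (2 * m + 2).choose (2 * j + 2)
          + (2 * m + 2).choose (2 * j + 3) := by
      rw [show 2 * m + 4 = (2 * m + 2) + 2 from by ring,
        show 2 * j + 3 = (2 * j + 1) + 2 from by ring]
      exact hp _ _
    have e4b : (2 * m + 4).choose (2 * j + 4)
        = (2 * m + 2).choose (2 * j + 2) + 2 * (2 * m + 2).choose (2 * j + 3)
          + (2 * m + 2).choose (2 * j + 4) := by
      rw [show 2 * m + 4 = (2 * m + 2) + 2 from by ring,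
        show 2 * j + 4 = (2 * j + 2) + 2 from by ring]
      exact hp _ _
    have e4c : (2 * m + 4).choose (2 * j + 5)
        = (2 * m + 2).choose (2 * j + 3) + 2 * (2 * m + 2).choose (2 * j + 4)
          + (2 * m + 2).choose (2 * j + 5) := by
      rw [show 2 * m + 4 = (2 * m + 2) + 2 from by ring,
        show 2 * j + 5 = (2 * j + 3) + 2 from by ring]
      exact hp _ _
    rw [e6, e4a, e4b, e4c, e5a, e5b,
      show 2 * (j + 2) + 1 = 2 * j + 5 from by ring,
      show 2 * (j + 1) + 1 = 2 * j + 3 from by ring]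
    push_cast
    ring

noncomputable def PolyC1 : Polynomial ℚ := -(2 * (1 + X))
noncomputable def PolyC2 : Polynomial ℚ := (1 - X) ^ 2

noncomputable def Dser : PowerSeries (Polynomial ℚ) :=
  1 + PowerSeries.C PolyC1 * PowerSeries.X + PowerSeries.C PolyC2 * PowerSeries.X ^ 2

noncomputable def yser : PowerSeries (Polynomial ℚ) := PowerSeries.mk Mpoly
noncomputable def rser : PowerSeries (Polynomial ℚ) := PowerSeries.mk Rpoly

lemma hC2ps : (PowerSeries.C (R := Polynomial ℚ)) 2 = 2 := map_ofNat _ 2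

lemma hM0 : Mpoly 0 = 1 := by simp [Mpoly]

lemma hM1 : Mpoly 1 = 1 + X := by
  simp [Mpoly, Finset.sum_range_succ]

lemma hR0 : Rpoly 0 = 1 := by
  norm_num [Rpoly, smul_smul]

lemma hR1 : Rpoly 1 = 2 + 2 * X := by
  ext k
  rw [coeff_R]
  match k with
  | 0 =>
    norm_num
  | 1 =>
    have h4 : (2 * 1 + 2).choose (2 * 1 + 1) = 4 := rfl
    rw [h4]
    rw [Polynomial.coeff_add]
    rw [show (2 : Polynomial ℚ) = C 2 from (map_ofNat _ 2).symm]
    rw [Polynomial.coeff_C_mul, Polynomial.coeff_C, Polynomial.coeff_X]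
    norm_num
  | (j + 2) =>
    rw [Nat.choose_eq_zero_of_lt (by omega)]
    rw [Polynomial.coeff_add]
    rw [show (2 : Polynomial ℚ) = C 2 from (map_ofNat _ 2).symm]
    rw [Polynomial.coeff_C_mul, Polynomial.coeff_C, Polynomial.coeff_X]
    norm_num

lemma dmul (f g : PowerSeries (Polynomial ℚ)) :
    (PowerSeries.derivative (Polynomial ℚ)) (f * g)
      = f * (PowerSeries.derivative (Polynomial ℚ)) g
        + g * (PowerSeries.derivative (Polynomial ℚ)) f := by
  show PowerSeries.derivativeFun (f * g) = _
  rw [PowerSeries.derivativeFun_mul]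
  simp [smul_eq_mul]
  rfl

lemma done1 : (PowerSeries.derivative (Polynomial ℚ)) 1 = 0 := by
  show PowerSeries.derivativeFun 1 = 0
  exact PowerSeries.derivativeFun_one

lemma hdD : (PowerSeries.derivative (Polynomial ℚ)) Dser
    = PowerSeries.C PolyC1 + PowerSeries.C PolyC2 * (2 * PowerSeries.X) := by
  unfold Dser
  rw [map_add, map_add, done1]
  rw [dmul, dmul, PowerSeries.derivative_C, PowerSeries.derivative_C,
    PowerSeries.derivative_X, pow_two, dmul, PowerSeries.derivative_X]
  ring

lemma key :
    (2 : PowerSeries (Polynomial ℚ)) * ((PowerSeries.derivative (Polynomial ℚ)) yser) * Dser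
      + yser * ((PowerSeries.derivative (Polynomial ℚ)) Dser) = 0 := by
  set dY := (PowerSeries.derivative (Polynomial ℚ)) yser with hdY
  have h1 : (2 : PowerSeries (Polynomial ℚ)) * dY * Dser
      = 2 * dY + (PowerSeries.C (2 * PolyC1) * dY) * PowerSeries.X
        + (PowerSeries.C (2 * PolyC2) * dY) * PowerSeries.X ^ 2 := by
    unfold Dser
    simp only [map_mul, hC2ps]
    ring
  have h2 : yser * ((PowerSeries.derivative (Polynomial ℚ)) Dser)
      = PowerSeries.C PolyC1 * yser + (PowerSeries.C (2 * PolyC2) * yser) * PowerSeries.X := by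
    rw [hdD]
    simp only [map_mul, hC2ps]
    ring
  rw [h1, h2]
  apply PowerSeries.ext
  intro n
  have hco : ∀ k, PowerSeries.coeff (R := Polynomial ℚ) k dY
      = Mpoly (k + 1) * ((k : Polynomial ℚ) + 1) := by
    intro k
    rw [hdY, PowerSeries.coeff_derivative]
    simp [yser]
  have h2dy : ∀ k, PowerSeries.coeff (R := Polynomial ℚ) k ((2 : PowerSeries (Polynomial ℚ)) * dY)
      = 2 * (Mpoly (k + 1) * ((k : Polynomial ℚ) + 1)) := by
    intro k
    rw [← hC2ps, PowerSeries.coeff_C_mul, hco]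
  match n with
  | 0 =>
    simp only [map_add, PowerSeries.coeff_zero_mul_X, map_zero]
    rw [show ((PowerSeries.X : PowerSeries (Polynomial ℚ)) ^ 2)
        = PowerSeries.X * PowerSeries.X from sq _,
      ← mul_assoc, PowerSeries.coeff_zero_mul_X]
    simp only [PowerSeries.coeff_C_mul, h2dy]
    rw [show PowerSeries.coeff (R := Polynomial ℚ) 0 yser = Mpoly 0 from by simp [yser]]
    rw [hM0, hM1]
    unfold PolyC1
    ring
  | 1 =>
    simp only [map_add, PowerSeries.coeff_succ_mul_X, map_zero]
    rw [show ((PowerSeries.X : PowerSeries (Polynomial ℚ)) ^ 2)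
        = PowerSeries.X * PowerSeries.X from sq _,
      ← mul_assoc, PowerSeries.coeff_succ_mul_X, PowerSeries.coeff_zero_mul_X]
    simp only [PowerSeries.coeff_C_mul, h2dy, hco,
      show ∀ k, PowerSeries.coeff (R := Polynomial ℚ) k yser = Mpoly k from fun k => by simp [yser]]
    have hm := Mrec' 0
    unfold PolyC1 PolyC2
    push_cast at hm ⊢
    linear_combination (2 : Polynomial ℚ) * hm
  | (m + 2) =>
    simp only [map_add, PowerSeries.coeff_succ_mul_X, map_zero]
    rw [PowerSeries.coeff_mul_X_pow]
    simp only [PowerSeries.coeff_C_mul, h2dy, hco, map_zero,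
      show ∀ k, PowerSeries.coeff (R := Polynomial ℚ) k yser = Mpoly k from fun k => by simp [yser]]
    have hm := Mrec' (m + 1)
    unfold PolyC1 PolyC2
    push_cast at hm ⊢
    linear_combination (2 : Polynomial ℚ) * hm

lemma hder : (PowerSeries.derivative (Polynomial ℚ)) (yser * yser * Dser) = 0 := by
  have h : (PowerSeries.derivative (Polynomial ℚ)) (yser * yser * Dser)
      = yser * ((2 : PowerSeries (Polynomial ℚ))
          * ((PowerSeries.derivative (Polynomial ℚ)) yser) * Dser
        + yser * ((PowerSeries.derivative (Polynomial ℚ)) Dser)) := by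
    rw [dmul, dmul]
    ring
  rw [h, key, mul_zero]

lemma coeff_succ_zero_of_d0 (f : PowerSeries (Polynomial ℚ))
    (h : (PowerSeries.derivative (Polynomial ℚ)) f = 0) (n : ℕ) :
    PowerSeries.coeff (R := Polynomial ℚ) (n + 1) f = 0 := by
  have h2 := congrArg (PowerSeries.coeff (R := Polynomial ℚ) n) h
  rw [PowerSeries.coeff_derivative, map_zero] at h2
  have hne : ((n : Polynomial ℚ) + 1) ≠ 0 := Nat.cast_add_one_ne_zero n
  exact (mul_eq_zero.mp h2).resolve_right hne

lemma hconstD : PowerSeries.constantCoeff (R := Polynomial ℚ) Dser = 1 := by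
  unfold Dser
  simp [PowerSeries.constantCoeff_X]

lemma hyyD : yser * yser * Dser = 1 := by
  apply PowerSeries.ext
  intro n
  match n with
  | 0 =>
    rw [PowerSeries.coeff_zero_eq_constantCoeff, map_mul, map_mul, hconstD]
    rw [show PowerSeries.constantCoeff (R := Polynomial ℚ) yser = Mpoly 0 from rfl, hM0]
    simp
  | (m + 1) =>
    rw [coeff_succ_zero_of_d0 _ hder m]
    rw [PowerSeries.coeff_one]
    simp

lemma hrD : rser * Dser = 1 := by
  have hexp : rser * Dser
      = rser + (PowerSeries.C PolyC1 * rser) * PowerSeries.X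
        + (PowerSeries.C PolyC2 * rser) * PowerSeries.X ^ 2 := by
    unfold Dser
    ring
  rw [hexp]
  apply PowerSeries.ext
  intro n
  have hr : ∀ k, PowerSeries.coeff (R := Polynomial ℚ) k rser = Rpoly k := fun k => by simp [rser]
  match n with
  | 0 =>
    simp only [map_add, PowerSeries.coeff_zero_mul_X]
    rw [show ((PowerSeries.X : PowerSeries (Polynomial ℚ)) ^ 2)
        = PowerSeries.X * PowerSeries.X from sq _,
      ← mul_assoc, PowerSeries.coeff_zero_mul_X]
    rw [PowerSeries.coeff_one]
    simp [hr, hR0]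
  | 1 =>
    simp only [map_add, PowerSeries.coeff_succ_mul_X]
    rw [show ((PowerSeries.X : PowerSeries (Polynomial ℚ)) ^ 2)
        = PowerSeries.X * PowerSeries.X from sq _,
      ← mul_assoc, PowerSeries.coeff_succ_mul_X, PowerSeries.coeff_zero_mul_X]
    simp only [PowerSeries.coeff_C_mul, hr]
    rw [hR0, hR1, PowerSeries.coeff_one]
    unfold PolyC1
    norm_num
    ring
  | (m + 2) =>
    simp only [map_add, PowerSeries.coeff_succ_mul_X]
    rw [PowerSeries.coeff_mul_X_pow]
    simp only [PowerSeries.coeff_C_mul, hr]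
    rw [PowerSeries.coeff_one]
    have := Rrec m
    unfold PolyC1 PolyC2
    norm_num
    linear_combination this

lemma hyyr : yser * yser = rser := by
  have hu : IsUnit Dser := by
    rw [PowerSeries.isUnit_iff_constantCoeff, hconstD]
    exact isUnit_one
  exact IsUnit.mul_right_cancel hu (hyyD.trans hrD.symm)

/-- Convolution of type-B Narayana polynomials `M_n(t) = ∑ C(n,k)² tᵏ`. -/
theorem typeB_narayana_convolution (n : ℕ) :
    (∑ k ∈ range (n + 1),
        (∑ i ∈ range (k + 1), ((k.choose i : ℚ) ^ 2) • (X : Polynomial ℚ) ^ i) *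
          (∑ i ∈ range (n - k + 1), (((n - k).choose i : ℚ) ^ 2) • (X : Polynomial ℚ) ^ i)) =
      (1 / 2 : ℚ) • ∑ k ∈ range (n + 1),
        (((2 * n + 2).choose (2 * k + 1) : ℚ)) • (X : Polynomial ℚ) ^ k := by
  have h := congrArg (PowerSeries.coeff (R := Polynomial ℚ) n) hyyr
  rw [PowerSeries.coeff_mul, Finset.Nat.sum_antidiagonal_eq_sum_range_succ_mk] at h
  simp only [yser, rser, PowerSeries.coeff_mk] at h
  simpa only [Mpoly, Rpoly] using h
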